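/- arXiv:2311.14781 — 2 statements merged into one kernel-verified Lean document; each statement's English description precedes it below -/
import Mathlib

section
/- There exists an absolute constant c > 0 such that the following holds. Let k ≥ 1 be an integer, let N be an even integer with N ≥ 4k, let A = {a_1 < a_2 < ⋯ < a_N} be a set of N real numbers, and let A' = {a_1 < a_2 < ⋯ < a_{N/2}} consist of the first N/2 elements of A. Then |(2k+1)(A−A)^2 − 2k(A−A)^2| ≥ c · |A| |kA' − kA'| / k. -/
open Finset Pointwise

/-- `distSet d A` is the set of Euclidean distances `Δ(A^d)` determined by the
`d`-fold Cartesian power `A^d ⊂ ℝ^d`. -/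
noncomputable def distSet (d : ℕ) (A : Finset ℝ) : Finset ℝ :=
  ((Fintype.piFinset fun _ : Fin d => A) ×ˢ (Fintype.piFinset fun _ : Fin d => A)).image
    fun pq => @dist (EuclideanSpace ℝ (Fin d)) _ (WithLp.toLp 2 pq.1) (WithLp.toLp 2 pq.2)

/-- `iterSum k S` is the `k`-fold iterated sumset `kS = S + ⋯ + S` (for `k ≥ 1`). -/
noncomputable def iterSum : ℕ → Finset ℝ → Finset ℝ
  | 0, _ => {0}
  | n + 1, S => iterSum n S + S

lemma iterSum_zero (S : Finset ℝ) : iterSum 0 S = {0} := rfl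

lemma iterSum_succ (n : ℕ) (S : Finset ℝ) : iterSum (n + 1) S = iterSum n S + S := rfl

lemma mem_iterSum_add {S : Finset ℝ} {m n : ℕ} {x y : ℝ}
    (hx : x ∈ iterSum m S) (hy : y ∈ iterSum n S) : x + y ∈ iterSum (m + n) S := by
  induction n generalizing y with
  | zero =>
      rw [iterSum_zero, Finset.mem_singleton] at hy
      subst hy; simpa using hx
  | succ n ih =>
      rw [iterSum_succ] at hy
      obtain ⟨y₀, hy₀, t, ht, rfl⟩ := Finset.mem_add.1 hy
      have h := Finset.add_mem_add (ih hy₀) ht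
      rw [← iterSum_succ] at h
      rw [show m + (n + 1) = m + n + 1 from rfl, ← add_assoc]
      exact h

theorem stmt10 :
    ∃ c : ℝ, 0 < c ∧
      ∀ (k N : ℕ), 1 ≤ k → Even N → 4 * k ≤ N →
        ∀ (a : ℕ → ℝ), (∀ i j : ℕ, 1 ≤ i → i < j → j ≤ N → a i < a j) →
          ∀ (A A' : Finset ℝ),
            A = (Finset.Icc 1 N).image a →
            A' = (Finset.Icc 1 (N / 2)).image a →
            ∀ S : Finset ℝ, S = (A - A).image (fun x => x ^ 2) →
              c * (A.card : ℝ) * ((iterSum k A' - iterSum k A').card : ℝ) / (k : ℝ) ≤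
                ((iterSum (2 * k + 1) S - iterSum (2 * k) S).card : ℝ) := by
  refine ⟨1/8, by norm_num, ?_⟩
  intro k N hk hNe hkN a hmono A A' hA hA' S hS
  have hNmod : N % 2 = 0 := Nat.even_iff.mp hNe
  have hN4 : 4 ≤ N := by omega
  have hhalf2 : 2 ≤ N / 2 := by omega
  have hhalfN : N / 2 ≤ N := by omega
  have hhalf2k : 2 * k ≤ N / 2 := by omega
  -- weak monotonicity
  have hle : ∀ i j, 1 ≤ i → i ≤ j → j ≤ N → a i ≤ a j := by
    intro i j h1 h2 h3
    rcases eq_or_lt_of_le h2 with h | h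
    · rw [h]
    · exact le_of_lt (hmono i j h1 h h3)
  have hmemA : ∀ i, 1 ≤ i → i ≤ N → a i ∈ A := by
    intro i h1 h2
    rw [hA]
    exact Finset.mem_image_of_mem a (Finset.mem_Icc.mpr ⟨h1, h2⟩)
  have hA'A : ∀ x ∈ A', x ∈ A := by
    intro x hx
    rw [hA'] at hx
    obtain ⟨i, hi, rfl⟩ := Finset.mem_image.1 hx
    rw [Finset.mem_Icc] at hi
    exact hmemA i hi.1 (le_trans hi.2 hhalfN)
  have hA'bounds : ∀ x ∈ A', a 1 ≤ x ∧ x ≤ a (N / 2) := by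
    intro x hx
    rw [hA'] at hx
    obtain ⟨i, hi, rfl⟩ := Finset.mem_image.1 hx
    rw [Finset.mem_Icc] at hi
    exact ⟨hle 1 i le_rfl hi.1 (le_trans hi.2 hhalfN),
      hle i (N / 2) hi.1 hi.2 hhalfN⟩
  have hSmem : ∀ x ∈ A, ∀ y ∈ A, (x - y) ^ 2 ∈ S := by
    intro x hx y hy
    rw [hS]
    exact Finset.mem_image_of_mem _ (Finset.sub_mem_sub hx hy)
  -- the minimal gap in the second half
  have hIccne : (Finset.Icc (N / 2 + 1) (N - 1)).Nonempty := by
    rw [Finset.nonempty_Icc]; omega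
  obtain ⟨n', hn'mem, hn'min⟩ :=
    Finset.exists_min_image (Finset.Icc (N / 2 + 1) (N - 1)) (fun n => a (n + 1) - a n) hIccne
  rw [Finset.mem_Icc] at hn'mem
  set δ : ℝ := a (n' + 1) - a n' with hδdef
  clear_value δ
  have hδpos : 0 < δ := by
    have := hmono n' (n' + 1) (by omega) (by omega) (by omega)
    rw [hδdef]; linarith
  have hδle : ∀ n, N / 2 + 1 ≤ n → n ≤ N - 1 → δ ≤ a (n + 1) - a n := by
    intro n h1 h2
    exact hn'min n (Finset.mem_Icc.mpr ⟨h1, h2⟩)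
  -- gap growth lemma
  have hgap : ∀ d i, N / 2 + 1 ≤ i → i + d ≤ N → (d : ℝ) * δ ≤ a (i + d) - a i := by
    intro d
    induction d with
    | zero => intro i _ _; simp
    | succ d ih =>
        intro i h1 h2
        have h3 := ih i h1 (by omega)
        have h4 := hδle (i + d) (by omega) (by omega)
        rw [show i + (d + 1) = (i + d) + 1 from rfl]
        push_cast
        linarith
  -- the key lifting lemma
  have key : ∀ m σ, σ ∈ iterSum m A' →
      ∃ F ∈ iterSum m S, ∃ G ∈ iterSum m S,
        F - G = 2 * δ * σ - (m : ℝ) * δ * (a n' + a (n' + 1)) := by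
    intro m
    induction m with
    | zero =>
        intro σ hσ
        rw [iterSum_zero, Finset.mem_singleton] at hσ
        subst hσ
        exact ⟨0, by rw [iterSum_zero]; simp, 0, by rw [iterSum_zero]; simp, by simp⟩
    | succ m ih =>
        intro σ hσ
        rw [iterSum_succ] at hσ
        obtain ⟨σ₀, h₀, α, hα, rfl⟩ := Finset.mem_add.1 hσ
        obtain ⟨F, hF, G, hG, hFG⟩ := ih σ₀ h₀
        have hu : a n' ∈ A := hmemA n' (by omega) (by omega)
        have hu' : a (n' + 1) ∈ A := hmemA (n' + 1) (by omega) (by omega)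
        have hαA : α ∈ A := hA'A α hα
        refine ⟨F + (a n' - α) ^ 2,
          Finset.add_mem_add hF (hSmem _ hu _ hαA),
          G + (a (n' + 1) - α) ^ 2,
          Finset.add_mem_add hG (hSmem _ hu' _ hαA), ?_⟩
        have hδ' : a (n' + 1) - a n' = δ := hδdef.symm
        push_cast
        linear_combination hFG + (2 * α - a n' - a (n' + 1)) * hδ'
  -- bounds on iterated sums of A'
  have hbnd : ∀ m σ, σ ∈ iterSum m A' → (m : ℝ) * a 1 ≤ σ ∧ σ ≤ (m : ℝ) * a (N / 2) := by
    intro m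
    induction m with
    | zero =>
        intro σ hσ
        rw [iterSum_zero, Finset.mem_singleton] at hσ
        subst hσ; simp
    | succ m ih =>
        intro σ hσ
        rw [iterSum_succ] at hσ
        obtain ⟨σ₀, h₀, α, hα, rfl⟩ := Finset.mem_add.1 hσ
        obtain ⟨hαl, hαu⟩ := hA'bounds α hα
        obtain ⟨hl, hu⟩ := ih σ₀ h₀
        constructor <;> push_cast <;> linarith
  set L : ℝ := a (N / 2) - a 1 with hLdef
  clear_value L
  have hLpos : 0 < L := by
    have := hmono 1 (N / 2) le_rfl (by omega) hhalfN
    rw [hLdef]; linarith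
  set Pfin : Finset ℝ := iterSum k A' - iterSum k A' with hPdef
  clear_value Pfin
  have hsb : ∀ s ∈ Pfin, -((k : ℝ) * L) ≤ s ∧ s ≤ (k : ℝ) * L := by
    intro s hs
    rw [hPdef] at hs
    obtain ⟨σ, hσ, τ, hτ, rfl⟩ := Finset.mem_sub.1 hs
    obtain ⟨h1, h2⟩ := hbnd k σ hσ
    obtain ⟨h3, h4⟩ := hbnd k τ hτ
    rw [hLdef]; constructor <;> nlinarith
  -- index selection
  set J : ℕ := (N / 2 - 1) / (2 * k) with hJdef
  clear_value J
  have h2kJ : 2 * k * J ≤ N / 2 - 1 := by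
    rw [hJdef, mul_comm]
    exact Nat.div_mul_le_self _ _
  have hnjN : ∀ j, j ≤ J → N / 2 + 1 + 2 * k * j ≤ N := by
    intro j hj
    have h1 : 2 * k * j ≤ 2 * k * J := Nat.mul_le_mul_left _ hj
    omega
  have hNJ : (N : ℕ) ≤ 8 * k * (J + 1) := by
    have hdm := Nat.div_add_mod (N / 2 - 1) (2 * k)
    have hmlt : (N / 2 - 1) % (2 * k) < 2 * k := Nat.mod_lt _ (by omega)
    have e1 : 8 * k * (J + 1) = 4 * (2 * k * J) + 8 * k := by ring
    rw [hJdef] at *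
    omega
  -- the injection
  set T : Finset (ℕ × ℝ) := (Finset.Icc 0 J) ×ˢ Pfin with hTdef
  clear_value T
  set tgt : Finset ℝ := iterSum (2 * k + 1) S - iterSum (2 * k) S with htgt
  clear_value tgt
  have hmaps : ∀ q ∈ T, (a (N / 2 + 1 + 2 * k * q.1) - a 1) ^ 2 + 2 * δ * q.2 ∈ tgt := by
    intro q hq
    rw [hTdef, Finset.mem_product] at hq
    obtain ⟨hq1, hq2⟩ := hq
    rw [Finset.mem_Icc] at hq1
    rw [hPdef] at hq2
    obtain ⟨σ, hσ, τ, hτ, hστ⟩ := Finset.mem_sub.1 hq2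
    obtain ⟨F₁, hF₁, G₁, hG₁, e₁⟩ := key k σ hσ
    obtain ⟨F₂, hF₂, G₂, hG₂, e₂⟩ := key k τ hτ
    have hx2 : (a (N / 2 + 1 + 2 * k * q.1) - a 1) ^ 2 ∈ S :=
      hSmem _ (hmemA _ (by omega) (hnjN q.1 hq1.2)) _ (hmemA 1 le_rfl (by omega))
    have hplus : F₁ + G₂ + (a (N / 2 + 1 + 2 * k * q.1) - a 1) ^ 2 ∈ iterSum (2 * k + 1) S := by
      have h12 : F₁ + G₂ ∈ iterSum (k + k) S := mem_iterSum_add hF₁ hG₂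
      have h : F₁ + G₂ + (a (N / 2 + 1 + 2 * k * q.1) - a 1) ^ 2 ∈ iterSum (k + k + 1) S := by
        rw [iterSum_succ]
        exact Finset.add_mem_add h12 hx2
      have hkk : k + k + 1 = 2 * k + 1 := by ring
      rwa [hkk] at h
    have hminus : G₁ + F₂ ∈ iterSum (2 * k) S := by
      have h12 : G₁ + F₂ ∈ iterSum (k + k) S := mem_iterSum_add hG₁ hF₂
      have hkk : k + k = 2 * k := by ring
      rwa [hkk] at h12
    have hval : (a (N / 2 + 1 + 2 * k * q.1) - a 1) ^ 2 + 2 * δ * q.2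
        = (F₁ + G₂ + (a (N / 2 + 1 + 2 * k * q.1) - a 1) ^ 2) - (G₁ + F₂) := by
      linear_combination -e₁ + e₂ - 2 * δ * hστ
    rw [htgt, hval]
    exact Finset.sub_mem_sub hplus hminus
  have hinj : Set.InjOn (fun q : ℕ × ℝ => (a (N / 2 + 1 + 2 * k * q.1) - a 1) ^ 2 + 2 * δ * q.2)
      ↑T := by
    intro q hq r hr heq
    simp only at heq
    rw [Finset.mem_coe, hTdef, Finset.mem_product, Finset.mem_Icc] at hq hr
    obtain ⟨hq1, hq2⟩ := hq
    obtain ⟨hr1, hr2⟩ := hr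
    obtain ⟨hqs1, hqs2⟩ := hsb q.2 hq2
    obtain ⟨hrs1, hrs2⟩ := hsb r.2 hr2
    have hfalse : ∀ u v : ℕ × ℝ, u.1 ≤ J → v.1 ≤ J → u.1 < v.1 →
        -((k : ℝ) * L) ≤ u.2 → u.2 ≤ (k : ℝ) * L →
        -((k : ℝ) * L) ≤ v.2 → v.2 ≤ (k : ℝ) * L →
        (a (N / 2 + 1 + 2 * k * u.1) - a 1) ^ 2 + 2 * δ * u.2
          = (a (N / 2 + 1 + 2 * k * v.1) - a 1) ^ 2 + 2 * δ * v.2 → False := by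
      intro u v huJ hvJ huv hu1 hu2 hv1 hv2 he
      obtain ⟨m, hm⟩ := Nat.exists_eq_add_of_lt huv
      have hvu : v.1 - u.1 = m + 1 := by omega
      have hsplit : N / 2 + 1 + 2 * k * v.1 = (N / 2 + 1 + 2 * k * u.1) + 2 * k * (v.1 - u.1) := by
        rw [hvu, hm]; ring
      have hgap1 : ((2 * k * (v.1 - u.1) : ℕ) : ℝ) * δ
          ≤ a (N / 2 + 1 + 2 * k * v.1) - a (N / 2 + 1 + 2 * k * u.1) := by
        rw [hsplit]
        exact hgap _ _ (by omega) (by rw [← hsplit]; exact hnjN v.1 hvJ)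
      have hdge : 2 * k ≤ 2 * k * (v.1 - u.1) := by
        have : 1 ≤ v.1 - u.1 := by omega
        calc 2 * k = 2 * k * 1 := by ring
        _ ≤ 2 * k * (v.1 - u.1) := Nat.mul_le_mul_left _ this
      have hgap2 : (2 * (k : ℝ)) * δ ≤ a (N / 2 + 1 + 2 * k * v.1) - a (N / 2 + 1 + 2 * k * u.1) := by
        refine le_trans ?_ hgap1
        have : (2 * (k : ℝ)) ≤ ((2 * k * (v.1 - u.1) : ℕ) : ℝ) := by
          exact_mod_cast hdge
        exact mul_le_mul_of_nonneg_right this (le_of_lt hδpos)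
      have hxu : L < a (N / 2 + 1 + 2 * k * u.1) - a 1 := by
        have := hmono (N / 2) (N / 2 + 1 + 2 * k * u.1) (by omega) (by omega) (hnjN u.1 huJ)
        rw [hLdef]; linarith
      have hxv : L < a (N / 2 + 1 + 2 * k * v.1) - a 1 := by
        have := hmono (N / 2) (N / 2 + 1 + 2 * k * v.1) (by omega) (by omega) (hnjN v.1 hvJ)
        rw [hLdef]; linarith
      have hk1 : (1 : ℝ) ≤ (k : ℝ) := by exact_mod_cast hk
      set x : ℝ := a (N / 2 + 1 + 2 * k * u.1) - a 1 with hxdef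
      set y : ℝ := a (N / 2 + 1 + 2 * k * v.1) - a 1 with hydef
      have hyx : (2 * (k : ℝ)) * δ ≤ y - x := by
        rw [hxdef, hydef]; linarith
      have he' : y ^ 2 - x ^ 2 = 2 * δ * (u.2 - v.2) := by linarith
      have he'' : (y - x) * (y + x) = 2 * δ * (u.2 - v.2) := by linear_combination he'
      have hsum : 2 * L < y + x := by linarith
      have hA1 : (2 * (k : ℝ) * δ) * (y + x) ≤ (y - x) * (y + x) :=
        mul_le_mul_of_nonneg_right hyx (by linarith)
      have hA2 : (2 * (k : ℝ) * δ) * (2 * L) < (2 * (k : ℝ) * δ) * (y + x) := by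
        have hpos : (0 : ℝ) < 2 * (k : ℝ) * δ := by
          have : (0:ℝ) < (k:ℝ) := by linarith
          positivity
        exact mul_lt_mul_of_pos_left hsum hpos
      have hA3 : 2 * δ * (u.2 - v.2) ≤ 2 * δ * (2 * (k : ℝ) * L) := by
        have : u.2 - v.2 ≤ 2 * (k : ℝ) * L := by linarith
        have h2δ : (0 : ℝ) ≤ 2 * δ := by linarith
        exact mul_le_mul_of_nonneg_left this h2δ
      linarith [hA1, hA2, hA3, he'']
    rcases lt_trichotomy q.1 r.1 with h | h | h
    · exact absurd heq (fun he => hfalse q r hq1.2 hr1.2 h hqs1 hqs2 hrs1 hrs2 he)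
    · have h2 : q.2 = r.2 := by
        rw [h] at heq
        have : 2 * δ * q.2 = 2 * δ * r.2 := add_left_cancel heq
        have hδne : (2 : ℝ) * δ ≠ 0 := by positivity
        exact mul_left_cancel₀ hδne this
      exact Prod.ext h h2
    · exact absurd heq.symm (fun he => hfalse r q hr1.2 hq1.2 h hrs1 hrs2 hqs1 hqs2 he)
  have hcard : T.card ≤ tgt.card :=
    Finset.card_le_card_of_injOn _ hmaps hinj
  have hTcard : T.card = (J + 1) * Pfin.card := by
    rw [hTdef, Finset.card_product, Nat.card_Icc, Nat.sub_zero]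
  have hAcard : A.card = N := by
    rw [hA]
    rw [Finset.card_image_of_injOn]
    · rw [Nat.card_Icc]; omega
    · intro i hi j hj hij
      rw [Finset.mem_coe, Finset.mem_Icc] at hi hj
      rcases lt_trichotomy i j with h | h | h
      · exact absurd hij (ne_of_lt (hmono i j hi.1 h hj.2))
      · exact h
      · exact absurd hij.symm (ne_of_lt (hmono j i hj.1 h hi.2))
  -- final computation
  have hkpos : (0 : ℝ) < (k : ℝ) := by exact_mod_cast hk
  rw [hAcard, div_le_iff₀ hkpos]
  have hfin1 : ((J : ℝ) + 1) * (Pfin.card : ℝ) ≤ (tgt.card : ℝ) := by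
    have := le_trans (le_of_eq hTcard.symm) hcard
    exact_mod_cast this
  have hfin2 : (N : ℝ) ≤ 8 * (k : ℝ) * ((J : ℝ) + 1) := by exact_mod_cast hNJ
  have hp0 : (0 : ℝ) ≤ (Pfin.card : ℝ) := Nat.cast_nonneg _
  have s1 : (N : ℝ) * (Pfin.card : ℝ) ≤ 8 * (k : ℝ) * ((J : ℝ) + 1) * (Pfin.card : ℝ) :=
    mul_le_mul_of_nonneg_right hfin2 hp0
  have s2 : 8 * (k : ℝ) * (((J : ℝ) + 1) * (Pfin.card : ℝ)) ≤ 8 * (k : ℝ) * (tgt.card : ℝ) :=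
    mul_le_mul_of_nonneg_left hfin1 (by positivity)
  linarith
end

section
/- There exists an absolute constant c > 0 such that the following holds. Let k ≥ 1 be an integer, let N be an even integer with N ≥ 4k, let X = {x_1 < x_2 < ⋯ < x_N} be a set of N real numbers with x_1 > 0, and let X' = {x_1 < x_2 < ⋯ < x_{N/2}} consist of the first N/2 elements of X. Then there exist x, x' ∈ X such that |{x}((k+1)X − kX) + {x'}(kX − kX)| ≥ c · |X| |kX' − kX'| / k. -/
set_option maxHeartbeats 1000000


open Finset Pointwise

lemma iterSum_mono {S T : Finset ℝ} (h : S ⊆ T) : ∀ n, iterSum n S ⊆ iterSum n T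
  | 0 => by simp [iterSum]
  | (n+1) => by
      simp only [iterSum]
      exact Finset.add_subset_add (iterSum_mono h n) h

lemma iterSum_bounds {lo hi : ℝ} {S : Finset ℝ} (hS : ∀ s ∈ S, lo ≤ s ∧ s ≤ hi) :
    ∀ (n : ℕ), ∀ s ∈ iterSum n S, (n : ℝ) * lo ≤ s ∧ s ≤ (n : ℝ) * hi
  | 0 => by
      intro s hs
      simp only [iterSum, Finset.mem_singleton] at hs
      subst hs; norm_num
  | (n+1) => by
      intro s hs
      simp only [iterSum, Finset.mem_add] at hs
      obtain ⟨a, ha, b, hb, rfl⟩ := hs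
      obtain ⟨h1, h2⟩ := iterSum_bounds hS n a ha
      obtain ⟨h3, h4⟩ := hS b hb
      constructor <;> push_cast <;> linarith

lemma mem_iterSum_succ {S : Finset ℝ} {a s : ℝ} {n : ℕ} (ha : a ∈ S) (hs : s ∈ iterSum n S) :
    a + s ∈ iterSum (n+1) S := by
  simp only [iterSum]
  rw [add_comm a s]
  exact Finset.add_mem_add hs ha

theorem stmt12 :
    ∃ c : ℝ, 0 < c ∧
      ∀ (k N : ℕ), 1 ≤ k → Even N → 4 * k ≤ N →
        ∀ (xs : ℕ → ℝ), 0 < xs 1 → (∀ i j : ℕ, 1 ≤ i → i < j → j ≤ N → xs i < xs j) →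
          ∀ (X X' : Finset ℝ),
            X = (Finset.Icc 1 N).image xs →
            X' = (Finset.Icc 1 (N / 2)).image xs →
            ∃ x ∈ X, ∃ x' ∈ X,
              c * (X.card : ℝ) * ((iterSum k X' - iterSum k X').card : ℝ) / (k : ℝ) ≤
                (((iterSum (k + 1) X - iterSum k X).image (fun y => x * y) +
                    (iterSum k X - iterSum k X).image (fun y => x' * y)).card : ℝ) := by
  classical
  refine ⟨1/8, by norm_num, ?_⟩
  intro k N hk hEven hN4 xs hxs1 hlt X X' hX hX'
  have hM2 : 2 * (N / 2) = N := by obtain ⟨r, hr⟩ := hEven; omega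
  set M := N / 2 with hM
  have hk1 : 1 ≤ k := hk
  have hkR : (1 : ℝ) ≤ (k : ℝ) := by exact_mod_cast hk
  have hkpos : (0 : ℝ) < (k : ℝ) := by linarith
  have hM2' : 2 ≤ M := by omega
  have hMN : M ≤ N := by omega
  have hmono : ∀ i j : ℕ, 1 ≤ i → i ≤ j → j ≤ N → xs i ≤ xs j := by
    intro i j h1 hij hj
    rcases lt_or_eq_of_le hij with hij' | rfl
    · exact (hlt i j h1 hij' hj).le
    · exact le_rfl
  set x1 := xs 1 with hx1
  set xh := xs M with hxh
  have hx1pos : 0 < x1 := hxs1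
  have hx1h : x1 ≤ xh := hmono 1 M le_rfl (by omega) hMN
  have hxhpos : 0 < xh := lt_of_lt_of_le hx1pos hx1h
  have hX'bound : ∀ b ∈ X', x1 ≤ b ∧ b ≤ xh := by
    intro b hb
    rw [hX'] at hb
    simp only [Finset.mem_image, Finset.mem_Icc] at hb
    obtain ⟨i, ⟨hi1, hi2⟩, rfl⟩ := hb
    exact ⟨hmono 1 i le_rfl hi1 (hi2.trans hMN), hmono i M hi1 hi2 hMN⟩
  set Rd : ℝ := (k : ℝ) * (xh - x1) with hRd
  set D' := iterSum k X' - iterSum k X' with hD'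
  have hD'bound : ∀ d ∈ D', -Rd ≤ d ∧ d ≤ Rd := by
    intro d hd
    rw [hD', Finset.mem_sub] at hd
    obtain ⟨s, hs, u, hu, rfl⟩ := hd
    obtain ⟨h1, h2⟩ := iterSum_bounds hX'bound k s hs
    obtain ⟨h3, h4⟩ := iterSum_bounds hX'bound k u hu
    constructor <;> nlinarith
  -- minimal gap in the top half
  obtain ⟨i, hiIcc, himin⟩ := Finset.exists_min_image (Finset.Icc (M+1) (N-1))
      (fun i => xs (i+1) - xs i) (Finset.nonempty_Icc.2 (by omega))
  rw [Finset.mem_Icc] at hiIcc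
  set x' := xs i with hx'def
  set x := xs (i+1) with hxdef
  have hi1 : M + 1 ≤ i := hiIcc.1
  have hi2 : i + 1 ≤ N := by omega
  have hδpos : 0 < x - x' := by
    have := hlt i (i+1) (by omega) (by omega) hi2
    linarith
  have hxhx : xh < x := hlt M (i+1) (by omega) (by omega) hi2
  have hx'X : x' ∈ X := by
    rw [hX]; exact Finset.mem_image_of_mem xs (Finset.mem_Icc.2 ⟨by omega, by omega⟩)
  have hxX : x ∈ X := by
    rw [hX]; exact Finset.mem_image_of_mem xs (Finset.mem_Icc.2 ⟨by omega, by omega⟩)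
  refine ⟨x, hxX, x', hx'X, ?_⟩
  -- pigeonhole: a window of length xh containing many elements of D'
  set Fi : ℕ → Finset ℝ :=
    fun t => D'.filter (fun d => -Rd + (t : ℝ) * xh ≤ d ∧ d < -Rd + ((t : ℝ)+1) * xh) with hFi
  have hcover : D' ⊆ (Finset.range (2*k)).biUnion Fi := by
    intro d hd
    obtain ⟨hd1, hd2⟩ := hD'bound d hd
    have hnn : 0 ≤ (d + Rd) / xh := div_nonneg (by linarith) hxhpos.le
    have h2R : d + Rd < 2 * (k : ℝ) * xh := by nlinarith
    rw [Finset.mem_biUnion]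
    refine ⟨⌊(d + Rd)/xh⌋₊, Finset.mem_range.2 ?_, Finset.mem_filter.2 ⟨hd, ?_, ?_⟩⟩
    · rw [Nat.floor_lt hnn]
      push_cast
      rw [div_lt_iff₀ hxhpos]
      linarith
    · have h := Nat.floor_le hnn
      rw [le_div_iff₀ hxhpos] at h
      linarith
    · have h := Nat.lt_floor_add_one ((d + Rd)/xh)
      rw [div_lt_iff₀ hxhpos] at h
      linarith
  have hsum : D'.card ≤ ∑ t ∈ Finset.range (2*k), (Fi t).card :=
    (Finset.card_le_card hcover).trans Finset.card_biUnion_le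
  have hex : ∃ t, D'.card ≤ 2 * k * (Fi t).card := by
    by_contra hcon
    push_neg at hcon
    have hlt2 : ∑ t ∈ Finset.range (2*k), 2 * k * (Fi t).card
        < ∑ _t ∈ Finset.range (2*k), D'.card :=
      Finset.sum_lt_sum_of_nonempty ⟨0, Finset.mem_range.2 (by omega)⟩ (fun t _ => hcon t)
    rw [Finset.sum_const, Finset.card_range, smul_eq_mul, ← Finset.mul_sum] at hlt2
    exact lt_irrefl _ (lt_of_le_of_lt (Nat.mul_le_mul_left (2*k) hsum) hlt2)
  obtain ⟨t, htm⟩ := hex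
  set T := ((iterSum (k + 1) X - iterSum k X).image (fun y => x * y) +
      (iterSum k X - iterSum k X).image (fun y => x' * y)) with hT
  have hX'subX : X' ⊆ X := by
    rw [hX, hX']
    exact Finset.image_subset_image (Finset.Icc_subset_Icc le_rfl hMN)
  have hmemT : ∀ p ∈ Finset.Icc (M+1) N ×ˢ Fi t,
      (fun p : ℕ × ℝ => x * (xs p.1 + p.2) + x' * (-p.2)) p ∈ T := by
    intro p hp
    rw [Finset.mem_product] at hp
    obtain ⟨hp1, hp2⟩ := hp
    rw [Finset.mem_Icc] at hp1
    have hd : p.2 ∈ D' := (Finset.mem_filter.1 hp2).1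
    rw [hD', Finset.mem_sub] at hd
    obtain ⟨s, hs, u, hu, hsu⟩ := hd
    have hsX : s ∈ iterSum k X := iterSum_mono hX'subX k hs
    have huX : u ∈ iterSum k X := iterSum_mono hX'subX k hu
    have hxj : xs p.1 ∈ X := by
      rw [hX]; exact Finset.mem_image_of_mem xs (Finset.mem_Icc.2 ⟨by omega, hp1.2⟩)
    apply Finset.add_mem_add
    · refine Finset.mem_image.2 ⟨xs p.1 + s - u, ?_, by rw [← hsu]; ring⟩
      exact Finset.sub_mem_sub (mem_iterSum_succ hxj hsX) huX
    · exact Finset.mem_image.2 ⟨u - s, Finset.sub_mem_sub huX hsX, by rw [← hsu]; ring⟩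
  have key : ∀ p q : ℕ × ℝ, p ∈ Finset.Icc (M+1) N ×ˢ Fi t → q ∈ Finset.Icc (M+1) N ×ˢ Fi t →
      x * (xs p.1 + p.2) + x' * (-p.2) = x * (xs q.1 + q.2) + x' * (-q.2) → ¬ (p.1 < q.1) := by
    intro p q hp hq heq hpq
    rw [Finset.mem_product, Finset.mem_Icc] at hp hq
    obtain ⟨hp1, hp2⟩ := hp
    obtain ⟨hq1, hq2⟩ := hq
    have hpw := (Finset.mem_filter.1 hp2).2
    have hqw := (Finset.mem_filter.1 hq2).2
    have hgap : x - x' ≤ xs (p.1+1) - xs p.1 :=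
      himin p.1 (Finset.mem_Icc.2 ⟨hp1.1, by omega⟩)
    have hstep : xs (p.1+1) ≤ xs q.1 := hmono (p.1+1) q.1 (by omega) (by omega) hq1.2
    have hE : x * (xs q.1 - xs p.1) = (x - x') * (p.2 - q.2) := by linear_combination -heq
    have hw : p.2 - q.2 < xh := by linarith [hpw.2, hqw.1]
    have hg2 : x - x' ≤ xs q.1 - xs p.1 := by linarith
    nlinarith [mul_lt_mul_of_pos_left hw hδpos,
      mul_le_mul_of_nonneg_left hg2 (le_of_lt (lt_trans hxhpos hxhx)),
      mul_pos hδpos (sub_pos.2 hxhx)]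
  have hinj : Set.InjOn (fun p : ℕ × ℝ => x * (xs p.1 + p.2) + x' * (-p.2))
      ((Finset.Icc (M+1) N ×ˢ Fi t : Finset (ℕ × ℝ)) : Set (ℕ × ℝ)) := by
    intro p hp q hq heq
    rw [Finset.mem_coe] at hp hq
    have heq' : x * (xs p.1 + p.2) + x' * (-p.2) = x * (xs q.1 + q.2) + x' * (-q.2) := heq
    have h1 := key p q hp hq heq'
    have h2 := key q p hq hp heq'.symm
    have hj : p.1 = q.1 := by omega
    have hd : p.2 = q.2 := by
      have h3 : (x - x') * p.2 = (x - x') * q.2 := by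
        rw [hj] at heq'
        linear_combination heq'
      exact mul_left_cancel₀ (ne_of_gt hδpos) h3
    exact Prod.ext hj hd
  have hcard1 : (Finset.Icc (M+1) N ×ˢ Fi t).card ≤ T.card :=
    Finset.card_le_card_of_injOn _ hmemT hinj
  have hcard2 : (Finset.Icc (M+1) N ×ˢ Fi t).card = M * (Fi t).card := by
    rw [Finset.card_product, Nat.card_Icc]
    congr 1
    omega
  have hXcard : X.card = N := by
    rw [hX, Finset.card_image_of_injOn, Nat.card_Icc]
    · omega
    · intro a ha b hb hab
      simp only [Finset.coe_Icc, Set.mem_Icc] at ha hb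
      by_contra hne
      rcases lt_or_gt_of_ne hne with h' | h'
      · exact absurd hab (ne_of_lt (hlt a b ha.1 h' hb.2))
      · exact absurd hab (ne_of_gt (hlt b a hb.1 h' ha.2))
  rw [hXcard, div_le_iff₀ hkpos]
  have c1 : ((M : ℝ) * ((Fi t).card : ℝ)) ≤ (T.card : ℝ) := by
    have := hcard2 ▸ hcard1
    exact_mod_cast this
  have c2 : ((D'.card : ℕ) : ℝ) ≤ 2 * (k : ℝ) * ((Fi t).card : ℝ) := by exact_mod_cast htm
  have hNM : (N : ℝ) = 2 * (M : ℝ) := by exact_mod_cast hM2.symm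
  rw [hNM]
  nlinarith [mul_le_mul_of_nonneg_left c2 (Nat.cast_nonneg M : (0:ℝ) ≤ (M:ℝ)),
    mul_le_mul_of_nonneg_left c1 (le_of_lt hkpos),
    mul_nonneg (le_of_lt hkpos) (Nat.cast_nonneg T.card)]
end
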